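/- Let d ≥ 1, σ > 0 and α > 0, let ‖·‖ be the ℓ∞ norm on ℤ^d, and let (g_z)_{z∈ℤ^d} be i.i.d. Gaussian random variables with mean 0 and variance σ². Let Π_U = Σ_{z∈ℤ^d∖U} δ_{‖z‖^α + g_z} for U ⊆ ℤ^d. Then for all finite S, T ⊆ ℤ^d with |S| = |T|, the laws of Π_S and Π_T are mutually absolutely continuous. -/

import Mathlib

open MeasureTheory ProbabilityTheory Filter Set
open scoped NNReal ENNReal

/-- The configuration `Π_U = Σ_{z ∈ ℤ^d ∖ U} δ_{‖z‖^α + g(z)}` as a Borel measure on `ℝ`,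
where `‖·‖` is the `ℓ∞` norm on `ℤ^d = (Fin d → ℤ)`. -/
noncomputable def latticeConfig {d : ℕ} (α : ℝ) (g : (Fin d → ℤ) → ℝ) (U : Set (Fin d → ℤ)) :
    Measure ℝ :=
  Measure.sum (fun z : {z : Fin d → ℤ // z ∉ U} => Measure.dirac (‖z.1‖ ^ α + g z.1))

section Aux

variable {d : ℕ}

/-- Splitting off a single point from the configuration. -/
lemma latticeConfig_split (α : ℝ) (f : (Fin d → ℤ) → ℝ) (U : Set (Fin d → ℤ))
    (b : Fin d → ℤ) (hb : b ∉ U) :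
    latticeConfig α f U
      = latticeConfig α f (U ∪ {b}) + Measure.dirac (‖b‖ ^ α + f b) := by
  ext s hs
  rw [Measure.add_apply, latticeConfig, latticeConfig, Measure.sum_apply _ hs,
    Measure.sum_apply _ hs]
  have h1 : ∀ (V : Set (Fin d → ℤ)),
      (∑' (z : {z : Fin d → ℤ // z ∉ V}), Measure.dirac (‖z.1‖ ^ α + f z.1) s)
        = ∑' (z : Fin d → ℤ),
            Set.indicator Vᶜ (fun z => Measure.dirac (‖z‖ ^ α + f z) s) z := by
    intro V
    exact tsum_subtype Vᶜ (fun z => Measure.dirac (‖z‖ ^ α + f z) s)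
  rw [h1, h1]
  have hU : Uᶜ = (U ∪ {b})ᶜ ∪ {b} := by
    ext z
    by_cases hz : z = b <;> simp [hz, hb]
  have hdisj : Disjoint ((U ∪ {b})ᶜ : Set (Fin d → ℤ)) {b} := by
    rw [Set.disjoint_singleton_right]
    simp
  rw [hU, Set.indicator_union_of_disjoint hdisj, ENNReal.tsum_add]
  congr 1
  rw [← tsum_subtype ({b} : Set (Fin d → ℤ)) (fun z => Measure.dirac (‖z‖ ^ α + f z) s)]
  exact tsum_singleton b (fun z => Measure.dirac (‖z‖ ^ α + f z) s)

/-- The reconstruction map is measurable. -/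
lemma measurable_configMap (α : ℝ) (W : Set (Fin d → ℤ)) :
    Measurable (fun p : ({z : Fin d → ℤ // z ∉ W} → ℝ) × ℝ =>
      (Measure.sum fun z : {z : Fin d → ℤ // z ∉ W} =>
          Measure.dirac (‖z.1‖ ^ α + p.1 z)) + Measure.dirac p.2) := by
  apply Measure.measurable_of_measurable_coe
  intro s hs
  simp only [Measure.add_apply, Measure.sum_apply _ hs, Measure.dirac_apply' _ hs]
  apply Measurable.add
  · apply Measurable.ennreal_tsum
    intro z
    exact (measurable_one.indicator hs).comp
      (measurable_const.add ((measurable_pi_apply z).comp measurable_fst))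
  · exact (measurable_one.indicator hs).comp measurable_snd

end Aux

section Swap

variable {d : ℕ} {Ω : Type*} [MeasurableSpace Ω]

/-- Grouping: the restriction of the family to the complement of `W` is independent of the
coordinate `b ∈ W`. -/
lemma indep_restrict (P : Measure Ω) [IsProbabilityMeasure P]
    (g : (Fin d → ℤ) → Ω → ℝ) (hmeas : ∀ z, Measurable (g z))
    (hindep : iIndepFun g P)
    (W : Set (Fin d → ℤ)) (b : Fin d → ℤ) (hb : b ∈ W) :
    IndepFun (fun ω => fun z : {z : Fin d → ℤ // z ∉ W} => g z.1 ω) (g b) P := by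
  have h := indep_iSup_of_disjoint (m := fun z => Real.measurableSpace.comap (g z))
    (fun z => (hmeas z).comap_le) hindep
    (S := Wᶜ) (T := {b}) (by simpa using hb)
  have h2 : (⨆ z ∈ ({b} : Set (Fin d → ℤ)), Real.measurableSpace.comap (g z))
      = Real.measurableSpace.comap (g b) := by
    simp
  rw [h2] at h
  have hpi : MeasurableSpace.comap (fun ω => fun z : {z : Fin d → ℤ // z ∉ W} => g z.1 ω)
      MeasurableSpace.pi = ⨆ z : {z : Fin d → ℤ // z ∉ W}, Real.measurableSpace.comap (g z.1) := by
    rw [MeasurableSpace.pi, MeasurableSpace.comap_iSup]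
    exact iSup_congr fun z => MeasurableSpace.comap_comp
  refine indep_of_indep_of_le_left h ?_
  refine le_trans (le_of_eq hpi) (iSup_le fun z => ?_)
  exact le_iSup₂ (f := fun (z : Fin d → ℤ) (_ : z ∈ Wᶜ) => Real.measurableSpace.comap (g z))
    z.1 z.2

end Swap

section SwapAC

variable {d : ℕ} {Ω : Type*} [MeasurableSpace Ω]

lemma swap_ac (σ : ℝ) (hσ : 0 < σ) (α : ℝ)
    (P : Measure Ω) [IsProbabilityMeasure P]
    (g : (Fin d → ℤ) → Ω → ℝ) (hmeas : ∀ z, Measurable (g z))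
    (hindep : iIndepFun g P)
    (hlaw : ∀ z, P.map (g z) = gaussianReal 0 ⟨σ ^ 2, sq_nonneg σ⟩)
    (S : Finset (Fin d → ℤ)) (a b : Fin d → ℤ) (ha : a ∈ S) (hb : b ∉ S) :
    P.map (fun ω => latticeConfig α (fun z => g z ω) (↑S : Set (Fin d → ℤ))) ≪
      P.map (fun ω => latticeConfig α (fun z => g z ω)
        (↑(insert b (S.erase a)) : Set (Fin d → ℤ))) := by
  have hσ2 : (0:ℝ) < σ ^ 2 := by positivity
  set v : ℝ≥0 := ⟨σ ^ 2, sq_nonneg σ⟩ with hv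
  have hvne : v ≠ 0 := by
    intro h
    have h2 : (v : ℝ) = 0 := by rw [h]; simp
    rw [hv] at h2
    exact hσ2.ne' h2
  have hab : a ≠ b := fun h => hb (h ▸ ha)
  set W : Set (Fin d → ℤ) := (↑S : Set (Fin d → ℤ)) ∪ {b} with hW
  have hbW : b ∈ W := Or.inr rfl
  have haW : a ∈ W := Or.inl ha
  have hbS : b ∉ (↑S : Set (Fin d → ℤ)) := hb
  have hUb : (↑S : Set (Fin d → ℤ)) ∪ {b} = W := rfl
  have haS' : a ∉ (↑(insert b (S.erase a)) : Set (Fin d → ℤ)) := by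
    simp [hab]
  have hUa : (↑(insert b (S.erase a)) : Set (Fin d → ℤ)) ∪ {a} = W := by
    rw [hW]
    ext z
    by_cases hz : z = a <;> simp [hz, ha, hab]
  have hG : Measurable (fun p : ({z : Fin d → ℤ // z ∉ W} → ℝ) × ℝ =>
      (Measure.sum fun z : {z : Fin d → ℤ // z ∉ W} =>
          Measure.dirac (‖z.1‖ ^ α + p.1 z)) + Measure.dirac p.2) := measurable_configMap α W
  set G : ({z : Fin d → ℤ // z ∉ W} → ℝ) × ℝ → Measure ℝ := fun p =>
      (Measure.sum fun z : {z : Fin d → ℤ // z ∉ W} =>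
          Measure.dirac (‖z.1‖ ^ α + p.1 z)) + Measure.dirac p.2 with hGdef
  set X : Ω → {z : Fin d → ℤ // z ∉ W} → ℝ := fun ω z => g z.1 ω with hXdef
  have hX : Measurable X := measurable_pi_lambda _ fun z => hmeas z.1
  have key : ∀ (c : Fin d → ℤ), ∀ U : Set (Fin d → ℤ), U ∪ {c} = W → c ∉ U →
      (fun ω => latticeConfig α (fun z => g z ω) U)
        = fun ω => G (X ω, ‖c‖ ^ α + g c ω) := by
    intro c U hU hcU
    funext ω
    rw [latticeConfig_split α (fun z => g z ω) U c hcU, hU]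
    rfl
  have hlawc : ∀ c : Fin d → ℤ, P.map (fun ω => ‖c‖ ^ α + g c ω)
      = gaussianReal (‖c‖ ^ α) v := by
    intro c
    have hc : (fun ω => ‖c‖ ^ α + g c ω) = (fun x => ‖c‖ ^ α + x) ∘ g c := rfl
    rw [hc, ← Measure.map_map (measurable_const_add _) (hmeas c), hlaw c,
      gaussianReal_map_const_add]
    simp [hv]
  have hjoint : ∀ c ∈ W, P.map (fun ω => (X ω, ‖c‖ ^ α + g c ω))
      = (P.map X).prod (gaussianReal (‖c‖ ^ α) v) := by
    intro c hc
    have hi : IndepFun X (fun ω => ‖c‖ ^ α + g c ω) P := by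
      have h0 := indep_restrict P g hmeas hindep W c hc
      have := h0.comp (φ := id) (ψ := fun x => ‖c‖ ^ α + x)
        measurable_id (measurable_const_add _)
      exact this
    rw [(indepFun_iff_map_prod_eq_prod_map_map hX.aemeasurable
      (show Measurable (fun ω => ‖c‖ ^ α + g c ω) from measurable_const.add (hmeas c)).aemeasurable).mp hi, hlawc c]
  have hmap : ∀ (c : Fin d → ℤ), c ∈ W → ∀ U : Set (Fin d → ℤ), U ∪ {c} = W → c ∉ U →
      P.map (fun ω => latticeConfig α (fun z => g z ω) U)
        = ((P.map X).prod (gaussianReal (‖c‖ ^ α) v)).map G := by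
    intro c hc U hU hcU
    rw [key c U hU hcU, ← hjoint c hc,
      Measure.map_map hG (hX.prodMk (show Measurable (fun ω => ‖c‖ ^ α + g c ω) from measurable_const.add (hmeas c)))]
    rfl
  rw [hmap b hbW _ hUb hbS, hmap a haW _ hUa haS']
  haveI : IsProbabilityMeasure (P.map X) := Measure.isProbabilityMeasure_map hX.aemeasurable
  refine Measure.AbsolutelyContinuous.map ?_ hG
  exact Measure.AbsolutelyContinuous.prod Measure.AbsolutelyContinuous.rfl
    ((gaussianReal_absolutelyContinuous _ hvne).trans
      (gaussianReal_absolutelyContinuous' _ hvne))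

end SwapAC

section Main

variable {d : ℕ} {Ω : Type*} [MeasurableSpace Ω]

lemma main_aux (σ : ℝ) (hσ : 0 < σ) (α : ℝ)
    (P : Measure Ω) [IsProbabilityMeasure P]
    (g : (Fin d → ℤ) → Ω → ℝ) (hmeas : ∀ z, Measurable (g z))
    (hindep : iIndepFun g P)
    (hlaw : ∀ z, P.map (g z) = gaussianReal 0 ⟨σ ^ 2, sq_nonneg σ⟩) :
    ∀ (n : ℕ) (S T : Finset (Fin d → ℤ)), S.card = T.card → (S \ T).card = n →
      (P.map (fun ω => latticeConfig α (fun z => g z ω) (↑S : Set (Fin d → ℤ))) ≪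
        P.map (fun ω => latticeConfig α (fun z => g z ω) (↑T : Set (Fin d → ℤ))) ∧
       P.map (fun ω => latticeConfig α (fun z => g z ω) (↑T : Set (Fin d → ℤ))) ≪
        P.map (fun ω => latticeConfig α (fun z => g z ω) (↑S : Set (Fin d → ℤ)))) := by
  intro n
  induction n with
  | zero =>
    intro S T hST h0
    have hSeq : S = T := Finset.eq_of_subset_of_card_le
      ((Finset.sdiff_eq_empty_iff_subset).mp (Finset.card_eq_zero.mp h0)) (le_of_eq hST.symm)
    subst hSeq
    exact ⟨Measure.AbsolutelyContinuous.rfl, Measure.AbsolutelyContinuous.rfl⟩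
  | succ n ih =>
    intro S T hST hn
    obtain ⟨a, haST⟩ : (S \ T).Nonempty := Finset.card_pos.mp (by omega)
    obtain ⟨b, hbTS⟩ : (T \ S).Nonempty := Finset.card_pos.mp
      (by rw [← Finset.card_sdiff_comm hST]; omega)
    have haS : a ∈ S := (Finset.mem_sdiff.mp haST).1
    have haT : a ∉ T := (Finset.mem_sdiff.mp haST).2
    have hbT : b ∈ T := (Finset.mem_sdiff.mp hbTS).1
    have hbS : b ∉ S := (Finset.mem_sdiff.mp hbTS).2
    set S' : Finset (Fin d → ℤ) := insert b (S.erase a) with hS'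
    have hbe : b ∉ S.erase a := fun h => hbS (Finset.mem_of_mem_erase h)
    have hcard : S'.card = T.card := by
      rw [hS', Finset.card_insert_of_notMem hbe, Finset.card_erase_of_mem haS, ← hST]
      have : 0 < S.card := Finset.card_pos.mpr ⟨a, haS⟩
      omega
    have hsd : (S' \ T).card = n := by
      have hset : S' \ T = (S \ T).erase a := by
        ext z
        simp only [hS', Finset.mem_sdiff, Finset.mem_insert, Finset.mem_erase]
        constructor
        · rintro ⟨h1 | h2, hzT⟩
          · exact absurd (h1 ▸ hbT) hzT
          · exact ⟨h2.1, h2.2, hzT⟩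
        · rintro ⟨hza, hzS, hzT⟩
          exact ⟨Or.inr ⟨hza, hzS⟩, hzT⟩
      rw [hset, Finset.card_erase_of_mem haST, hn]
      omega
    obtain ⟨h1, h2⟩ := ih S' T hcard hsd
    have hs1 := swap_ac σ hσ α P g hmeas hindep hlaw S a b haS hbS
    have hbS' : b ∈ S' := Finset.mem_insert_self _ _
    have haS' : a ∉ S' := by
      simp only [hS', Finset.mem_insert, Finset.mem_erase]
      push_neg
      exact ⟨fun h => hbS (h ▸ haS), fun h => absurd rfl h⟩
    have hback : insert a (S'.erase b) = S := by
      rw [hS', Finset.erase_insert hbe, Finset.insert_erase haS]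
    have hs2 := swap_ac σ hσ α P g hmeas hindep hlaw S' b a hbS' haS'
    rw [hback] at hs2
    exact ⟨hs1.trans h1, h2.trans hs2⟩

end Main

/-- For `Π = {‖z‖^α + g_z}_{z ∈ ℤ^d}` with i.i.d. `N(0, σ²)` noise, deleting two finite sets
of the same cardinality yields mutually absolutely continuous laws: only the number of
deleted points, not their identity, can be detected. -/
theorem equal_cardinality_deletions_equivalent
    (d : ℕ) (hd : 1 ≤ d) (σ : ℝ) (hσ : 0 < σ) (α : ℝ) (hα : 0 < α)
    {Ω : Type*} [MeasurableSpace Ω] (P : Measure Ω) [IsProbabilityMeasure P]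
    (g : (Fin d → ℤ) → Ω → ℝ) (hmeas : ∀ z, Measurable (g z))
    (hindep : iIndepFun g P)
    (hlaw : ∀ z, P.map (g z) = gaussianReal 0 ⟨σ ^ 2, sq_nonneg σ⟩)
    (S T : Finset (Fin d → ℤ)) (hST : S.card = T.card) :
    P.map (fun ω => latticeConfig α (fun z => g z ω) (↑S : Set (Fin d → ℤ))) ≪
      P.map (fun ω => latticeConfig α (fun z => g z ω) (↑T : Set (Fin d → ℤ))) ∧
    P.map (fun ω => latticeConfig α (fun z => g z ω) (↑T : Set (Fin d → ℤ))) ≪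
      P.map (fun ω => latticeConfig α (fun z => g z ω) (↑S : Set (Fin d → ℤ))) :=
  main_aux σ hσ α P g hmeas hindep hlaw ((S \ T).card) S T hST rfl
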